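/- Let M be a homogeneous, monotone mean on positive reals such that the limit C := lim_{n→∞} n · M(1, 1/2, ..., 1/n) exists in [0, +∞]. If M is a weak-Hardy mean, then C is finite. -/

import Mathlib

open scoped ENNReal
/-- `M n v` is the value of the mean on the `(n+1)`-tuple `v`. -/
def IsMean (M : ∀ n : ℕ, (Fin (n+1) → ℝ) → ℝ) : Prop :=
  ∀ (n : ℕ) (v : Fin (n+1) → ℝ), (∀ i, 0 < v i) →
    Finset.univ.inf' Finset.univ_nonempty v ≤ M n v ∧
    M n v ≤ Finset.univ.sup' Finset.univ_nonempty v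

/-- `M` is (positively) homogeneous. -/
def IsHomogeneousMean (M : ∀ n : ℕ, (Fin (n+1) → ℝ) → ℝ) : Prop :=
  ∀ (n : ℕ) (v : Fin (n+1) → ℝ) (t : ℝ), 0 < t → (∀ i, 0 < v i) →
    M n (fun i => t * v i) = t * M n v

/-- `M` is nondecreasing in each variable (on positive tuples). -/
def IsMonotoneMean (M : ∀ n : ℕ, (Fin (n+1) → ℝ) → ℝ) : Prop :=
  ∀ (n : ℕ) (v w : Fin (n+1) → ℝ), (∀ i, 0 < v i) → (∀ i, v i ≤ w i) →
    M n v ≤ M n w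

/-- `M` is a weak-Hardy mean. -/
def IsWeakHardyMean (M : ∀ n : ℕ, (Fin (n+1) → ℝ) → ℝ) : Prop :=
  ∀ b : ℕ → ℝ, (∀ n, 0 < b n) → (∑' n, ENNReal.ofReal (b n)) ≠ ⊤ →
    (∑' n, ENNReal.ofReal (M n (fun i => b i.1))) ≠ ⊤

/-- if `M` is a homogeneous monotone mean and the limit
`C = lim_n n · M(1, 1/2, …, 1/n)` exists in `[0,∞]`, and `M` is weak-Hardy,
then `C` is finite.  (`M n (fun i => 1/(i+1))` is `M(1, 1/2, …, 1/(n+1))`.) -/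
theorem stmt6 (M : ∀ n : ℕ, (Fin (n+1) → ℝ) → ℝ) (hM : IsMean M)
    (hhom : IsHomogeneousMean M) (hmono : IsMonotoneMean M)
    (C : ℝ≥0∞)
    (hlim : Filter.Tendsto
      (fun n : ℕ => ENNReal.ofReal ((n + 1 : ℝ) * M n (fun i => 1 / (i.1 + 1 : ℝ))))
      Filter.atTop (nhds C))
    (hWH : IsWeakHardyMean M) : C ≠ ⊤ := by
  by_contra hC

  subst hC
  -- basic facts about the reference tuple
  set A : ℕ → ℝ := fun n => (n + 1 : ℝ) * M n (fun i => 1 / (i.1 + 1 : ℝ)) with hA_def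
  have upos : ∀ (n : ℕ) (i : Fin (n+1)), (0:ℝ) < 1 / (i.1 + 1 : ℝ) := by
    intro n i; positivity
  have hMu_lb : ∀ n : ℕ, 1 / (n + 1 : ℝ) ≤ M n (fun i => 1 / (i.1 + 1 : ℝ)) := by
    intro n
    refine le_trans ?_ (hM n _ (upos n)).1
    apply Finset.le_inf'
    intro i _
    apply one_div_le_one_div_of_le (by positivity)
    have := i.isLt
    have : (i.1 : ℝ) ≤ n := by exact_mod_cast Nat.lt_succ_iff.mp this
    linarith
  have hMu_pos : ∀ n : ℕ, 0 < M n (fun i => 1 / (i.1 + 1 : ℝ)) := by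
    intro n; exact lt_of_lt_of_le (by positivity) (hMu_lb n)
  have hA1 : ∀ n : ℕ, (1:ℝ) ≤ A n := by
    intro n
    have h1 : (0:ℝ) < (n + 1 : ℝ) := by positivity
    have := mul_le_mul_of_nonneg_left (hMu_lb n) h1.le
    rw [mul_one_div, div_self h1.ne'] at this
    exact this
  -- A tends to infinity
  have hAtop : Filter.Tendsto A Filter.atTop Filter.atTop := by
    rw [Filter.tendsto_atTop]
    intro K
    have := ENNReal.tendsto_nhds_top_iff_nnreal.mp hlim (Real.toNNReal K)
    filter_upwards [this] with n hn
    by_contra h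
    push_neg at h
    have : ENNReal.ofReal (A n) ≤ ENNReal.ofReal K := ENNReal.ofReal_le_ofReal h.le
    rw [ENNReal.ofReal] at this
    exact absurd hn (not_lt.2 this)
  have hΦ' : ∀ K : ℝ, ∃ N : ℕ, ∀ n, N ≤ n → K ≤ A n := by
    intro K
    exact Filter.eventually_atTop.mp (hAtop.eventually_ge_atTop K)
  choose Φ hΦ using hΦ'
  -- the block boundaries
  set N : ℕ → ℕ := fun k => Nat.rec 0 (fun k Nk => max (Nk + 1) (Φ ((4:ℝ)^(k+1)))) k with hN_def
  have hN0 : N 0 = 0 := rfl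
  have hNsucc : ∀ k, N (k+1) = max (N k + 1) (Φ ((4:ℝ)^(k+1))) := fun k => rfl
  have hNmono : StrictMono N := by
    apply strictMono_nat_of_lt_succ
    intro k
    rw [hNsucc k]
    exact lt_of_lt_of_le (Nat.lt_succ_self _) (le_max_left _ _)
  have hNk : ∀ k, k ≤ N k := fun k => hNmono.le_apply
  have hblockA : ∀ k n, N k ≤ n → (4:ℝ)^k ≤ A n := by
    intro k n hn
    cases k with
    | zero => simpa using hA1 n
    | succ k =>
      apply hΦ ((4:ℝ)^(k+1)) n
      exact le_trans (le_trans (le_max_right _ _) (le_of_eq (hNsucc k).symm)) hn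
  -- harmonic masses of blocks and running maxima
  set d : ℕ → ℝ := fun n => 1 / (n + 1 : ℝ) with hd_def
  have hd_pos : ∀ n, 0 < d n := fun n => by positivity
  set h : ℕ → ℝ := fun k => ∑ n ∈ Finset.Ico (N k) (N (k+1)), d n with hh_def
  have hh0 : ∀ k, 0 ≤ h k := fun k => Finset.sum_nonneg fun n _ => (hd_pos n).le
  set m : ℕ → ℝ := fun k => Nat.rec (max 1 (h 0)) (fun k mk => max mk (h (k+1))) k with hm_def
  have hmsucc : ∀ k, m (k+1) = max (m k) (h (k+1)) := fun k => rfl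
  have hmmono : Monotone m := by
    apply monotone_nat_of_le_succ
    intro k; rw [hmsucc]; exact le_max_left _ _
  have hm1 : ∀ k, 1 ≤ m k := by
    intro k
    induction k with
    | zero => exact le_max_left _ _
    | succ k ih => exact le_trans ih (hmmono (Nat.le_succ k))
  have hmpos : ∀ k, (0:ℝ) < m k := fun k => lt_of_lt_of_le one_pos (hm1 k)
  have hhm : ∀ k, h k ≤ m k := by
    intro k
    cases k with
    | zero => exact le_max_right _ _
    | succ k => rw [hmsucc]; exact le_max_right _ _
  -- the weights
  set e : ℕ → ℝ := fun k => (1/2:ℝ)^k / m k with he_def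
  have hepos : ∀ k, 0 < e k := fun k => div_pos (by positivity) (hmpos k)
  have heanti : Antitone e := by
    apply antitone_nat_of_succ_le
    intro k
    apply div_le_div₀ (by positivity)
      (pow_le_pow_of_le_one (by norm_num) (by norm_num) (Nat.le_succ k))
      (hmpos k) (hmmono (Nat.le_succ k))
  -- block index
  set K : ℕ → ℕ := fun n => Nat.findGreatest (fun k => N k ≤ n) n with hK_def
  have hK1 : ∀ n, N (K n) ≤ n := by
    intro n
    have := Nat.findGreatest_spec (P := fun k => N k ≤ n) (Nat.zero_le n)
      (show N 0 ≤ n by rw [hN0]; exact Nat.zero_le n)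
    exact this
  have hK2 : ∀ n, n < N (K n + 1) := by
    intro n
    by_contra hcon
    push_neg at hcon
    exact Nat.findGreatest_is_greatest (Nat.lt_succ_self _) (le_trans (hNk _) hcon) hcon
  have hKmono : Monotone K := fun a b hab => Nat.findGreatest_mono (fun _ hx => le_trans hx hab) hab
  have hKeq : ∀ k n, N k ≤ n → n < N (k+1) → K n = k := by
    intro k n h1 h2
    have hle : K n ≤ k := by
      by_contra hcon
      push_neg at hcon
      have : N (k+1) ≤ N (K n) := hNmono.monotone hcon
      exact absurd (le_trans this (hK1 n)) (not_le.2 h2)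
    have hge : k ≤ K n := Nat.le_findGreatest (le_trans (hNk k) h1) h1
    exact le_antisymm hle hge
  -- the sequence b
  set b : ℕ → ℝ := fun n => e (K n) * d n with hb_def
  have hbpos : ∀ n, 0 < b n := fun n => mul_pos (hepos _) (hd_pos n)
  -- sums over blocks
  have sum_blocks : ∀ (f : ℕ → ℝ) (J : ℕ),
      ∑ n ∈ Finset.range (N J), f n
        = ∑ k ∈ Finset.range J, ∑ n ∈ Finset.Ico (N k) (N (k+1)), f n := by
    intro f J
    induction J with
    | zero => rw [hN0]; simp
    | succ J ih =>
      rw [Finset.sum_range_succ, ← ih, Finset.range_eq_Ico, Finset.range_eq_Ico]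
      exact (Finset.sum_Ico_consecutive f (Nat.zero_le (N J)) (hNmono.monotone (Nat.le_succ J))).symm
  have hbblock : ∀ k, ∑ n ∈ Finset.Ico (N k) (N (k+1)), b n = e k * h k := by
    intro k
    rw [hh_def, Finset.mul_sum]
    apply Finset.sum_congr rfl
    intro n hn
    rw [Finset.mem_Ico] at hn
    show e (K n) * d n = e k * d n
    rw [hKeq k n hn.1 hn.2]
  have hekhk : ∀ k, e k * h k ≤ (1/2:ℝ)^k := by
    intro k
    rw [he_def]
    have : (1/2:ℝ)^k / m k * h k = (1/2:ℝ)^k * (h k / m k) := by ring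
    rw [this]
    calc (1/2:ℝ)^k * (h k / m k) ≤ (1/2:ℝ)^k * 1 := by
          apply mul_le_mul_of_nonneg_left _ (by positivity)
          exact div_le_one_of_le₀ (hhm k) (hmpos k).le
      _ = (1/2:ℝ)^k := mul_one _
  -- b is summable
  have hbsummable : Summable b := by
    apply summable_of_sum_range_le (c := 2) (fun n => (hbpos n).le)
    intro n
    calc ∑ i ∈ Finset.range n, b i
        ≤ ∑ i ∈ Finset.range (N n), b i := by
          apply Finset.sum_le_sum_of_subset_of_nonneg
          · exact Finset.range_subset_range.2 (hNk n)
          · intro i _ _; exact (hbpos i).le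
      _ = ∑ k ∈ Finset.range n, ∑ i ∈ Finset.Ico (N k) (N (k+1)), b i := sum_blocks b n
      _ = ∑ k ∈ Finset.range n, e k * h k := by
          apply Finset.sum_congr rfl; intro k _; exact hbblock k
      _ ≤ ∑ k ∈ Finset.range n, (1/2:ℝ)^k := Finset.sum_le_sum fun k _ => hekhk k
      _ ≤ 2 := sum_geometric_two_le n
  have hbtsum_ne_top : (∑' n, ENNReal.ofReal (b n)) ≠ ⊤ := by
    rw [← ENNReal.ofReal_tsum_of_nonneg (fun n => (hbpos n).le) hbsummable]
    exact ENNReal.ofReal_ne_top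
  -- the key pointwise lower bound
  set ℓ : ℕ → ℝ := fun n => e (K n) * M n (fun i => 1 / (i.1 + 1 : ℝ)) with hl_def
  have hlpos : ∀ n, 0 < ℓ n := fun n => mul_pos (hepos _) (hMu_pos n)
  have main_lb : ∀ n, ℓ n ≤ M n (fun i : Fin (n+1) => b i.1) := by
    intro n
    have h1 : M n (fun i : Fin (n+1) => e (K n) * (1 / (i.1 + 1 : ℝ)))
        = e (K n) * M n (fun i => 1 / (i.1 + 1 : ℝ)) :=
      hhom n _ (e (K n)) (hepos _) (upos n)
    rw [show ℓ n = e (K n) * M n (fun i => 1 / (i.1 + 1 : ℝ)) from rfl, ← h1]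
    apply hmono n _ _ (fun i => mul_pos (hepos _) (upos n i))
    intro i
    have hin : (i.1 : ℕ) ≤ n := Nat.lt_succ_iff.mp i.isLt
    have : e (K n) ≤ e (K i.1) := heanti (hKmono hin)
    calc e (K n) * (1 / (i.1 + 1 : ℝ)) ≤ e (K i.1) * (1 / (i.1 + 1 : ℝ)) :=
          mul_le_mul_of_nonneg_right this (by positivity)
      _ = b i.1 := rfl
  -- ℓ is summable by weak-Hardy
  have hMb_sum : Summable (fun n => M n (fun i : Fin (n+1) => b i.1)) := by
    have h1 := hWH b hbpos hbtsum_ne_top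
    have h2 := ENNReal.summable_toReal h1
    apply h2.congr
    intro n
    exact ENNReal.toReal_ofReal (le_trans (hlpos n).le (main_lb n))
  have hlsummable : Summable ℓ :=
    Summable.of_nonneg_of_le (fun n => (hlpos n).le) main_lb hMb_sum
  set c : ℝ := ∑' n, ℓ n with hc_def
  have hpartial : ∀ s : Finset ℕ, ∑ n ∈ s, ℓ n ≤ c :=
    fun s => Summable.sum_le_tsum s (fun n _ => (hlpos n).le) hlsummable
  -- lower bound for block sums of ℓ
  have hGp : ∀ k, (2:ℝ)^k * (h k / m k) ≤ ∑ n ∈ Finset.Ico (N k) (N (k+1)), ℓ n := by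
    intro k
    have step : ∀ n ∈ Finset.Ico (N k) (N (k+1)), e k * ((4:ℝ)^k * d n) ≤ ℓ n := by
      intro n hn
      rw [Finset.mem_Ico] at hn
      have hAn : (4:ℝ)^k ≤ A n := hblockA k n hn.1
      have hMn : (4:ℝ)^k * d n ≤ M n (fun i => 1 / (i.1 + 1 : ℝ)) := by
        have hn1 : (0:ℝ) < (n + 1 : ℝ) := by positivity
        rw [hd_def]
        rw [hA_def] at hAn
        calc (4:ℝ)^k * (1 / (n + 1 : ℝ)) ≤ ((n + 1 : ℝ) * M n (fun i => 1 / (i.1 + 1 : ℝ))) * (1 / (n + 1 : ℝ)) :=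
              mul_le_mul_of_nonneg_right hAn (by positivity)
          _ = M n (fun i => 1 / (i.1 + 1 : ℝ)) := by field_simp
      have : ℓ n = e (K n) * M n (fun i => 1 / (i.1 + 1 : ℝ)) := rfl
      rw [this, hKeq k n hn.1 hn.2]
      exact mul_le_mul_of_nonneg_left hMn (hepos k).le
    calc (2:ℝ)^k * (h k / m k)
        = ∑ n ∈ Finset.Ico (N k) (N (k+1)), e k * ((4:ℝ)^k * d n) := by
          have hsum : ∑ n ∈ Finset.Ico (N k) (N (k+1)), e k * ((4:ℝ)^k * d n)
              = e k * ((4:ℝ)^k * ∑ n ∈ Finset.Ico (N k) (N (k+1)), d n) := by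
            rw [← Finset.mul_sum, ← Finset.mul_sum]
          have hsum2 : ∑ n ∈ Finset.Ico (N k) (N (k+1)), d n = h k := rfl
          have hek : e k = ((1:ℝ)/2)^k / m k := rfl
          have h4 : ((1:ℝ)/2)^k * (4:ℝ)^k = (2:ℝ)^k := by
            rw [← mul_pow]; norm_num
          rw [hsum, hsum2, hek, div_mul_eq_mul_div, ← mul_assoc, h4, mul_div_assoc]
      _ ≤ ∑ n ∈ Finset.Ico (N k) (N (k+1)), ℓ n := Finset.sum_le_sum step
  -- case analysis
  by_cases hB : ∃ B : ℝ, ∀ k, m k ≤ B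
  · -- bounded running maxima: contradiction with harmonic divergence
    obtain ⟨B, hB⟩ := hB
    have hB1 : (1:ℝ) ≤ B := le_trans (hm1 0) (hB 0)
    have key : ∀ J : ℕ, ∑ k ∈ Finset.range J, h k ≤ B * c := by
      intro J
      calc ∑ k ∈ Finset.range J, h k
          ≤ ∑ k ∈ Finset.range J, B * ((2:ℝ)^k * (h k / m k)) := by
            apply Finset.sum_le_sum
            intro k _
            have h1 : h k = m k * (h k / m k) := by
              rw [mul_comm]; exact (div_mul_cancel₀ (h k) (hmpos k).ne').symm
            have h2 : h k / m k ≤ (2:ℝ)^k * (h k / m k) := by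
              apply le_mul_of_one_le_left (div_nonneg (hh0 k) (hmpos k).le)
              exact one_le_pow₀ (by norm_num)
            calc h k = m k * (h k / m k) := h1
              _ ≤ B * (h k / m k) :=
                  mul_le_mul_of_nonneg_right (hB k) (div_nonneg (hh0 k) (hmpos k).le)
              _ ≤ B * ((2:ℝ)^k * (h k / m k)) :=
                  mul_le_mul_of_nonneg_left h2 (by linarith)
        _ = B * ∑ k ∈ Finset.range J, (2:ℝ)^k * (h k / m k) := by rw [Finset.mul_sum]
        _ ≤ B * ∑ k ∈ Finset.range J, ∑ n ∈ Finset.Ico (N k) (N (k+1)), ℓ n := by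
            apply mul_le_mul_of_nonneg_left _ (by linarith)
            exact Finset.sum_le_sum fun k _ => hGp k
        _ = B * ∑ n ∈ Finset.range (N J), ℓ n := by rw [sum_blocks ℓ J]
        _ ≤ B * c := mul_le_mul_of_nonneg_left (hpartial _) (by linarith)
    -- but the harmonic series diverges
    obtain ⟨J, hJ⟩ := (Real.tendsto_sum_range_one_div_nat_succ_atTop.eventually_gt_atTop
      (B * c)).exists
    have hJ2 : ∑ i ∈ Finset.range J, d i ≤ ∑ k ∈ Finset.range J, h k := by
      have : ∑ k ∈ Finset.range J, h k = ∑ n ∈ Finset.range (N J), d n := (sum_blocks d J).symm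
      rw [this]
      apply Finset.sum_le_sum_of_subset_of_nonneg (Finset.range_subset_range.2 (hNk J))
      intro i _ _; exact (hd_pos i).le
    have : ∑ i ∈ Finset.range J, d i = ∑ i ∈ Finset.range J, 1 / ((i:ℝ) + 1) := rfl
    rw [this] at hJ2
    linarith [key J]
  · -- unbounded running maxima: infinitely many record blocks
    push_neg at hB
    -- block sums of ℓ tend to 0
    have hten : Filter.Tendsto (fun k => ∑ n ∈ Finset.Ico (N k) (N (k+1)), ℓ n)
        Filter.atTop (nhds 0) := by
      have hL := hlsummable.hasSum.tendsto_sum_nat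
      have h1 : Filter.Tendsto (fun k => ∑ n ∈ Finset.range (N (k+1)), ℓ n)
          Filter.atTop (nhds c) := by
        apply hL.comp
        exact (StrictMono.tendsto_atTop (fun a b hab => hNmono (Nat.succ_lt_succ hab)))
      have h2 : Filter.Tendsto (fun k => ∑ n ∈ Finset.range (N k), ℓ n)
          Filter.atTop (nhds c) := hL.comp hNmono.tendsto_atTop
      have h3 := h1.sub h2
      rw [sub_self] at h3
      apply h3.congr
      intro k
      rw [Finset.range_eq_Ico, Finset.range_eq_Ico,
        ← Finset.sum_Ico_consecutive ℓ (Nat.zero_le (N k)) (hNmono.monotone (Nat.le_succ k))]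
      ring
    have hev : ∀ᶠ k in Filter.atTop, (∑ n ∈ Finset.Ico (N k) (N (k+1)), ℓ n) < 1 := by
      exact hten.eventually_lt_const one_pos
    -- but frequently block sums are ≥ 1
    have hfreq : ∀ J : ℕ, ∃ k, J ≤ k ∧ 1 ≤ ∑ n ∈ Finset.Ico (N k) (N (k+1)), ℓ n := by
      intro J
      -- find a record index ≥ J
      have hrec : ∃ k, J ≤ k ∧ m k < m (k+1) := by
        by_contra hcon
        push_neg at hcon
        have hconst : ∀ k, J ≤ k → m k ≤ m J := by
          intro k hk
          induction k with
          | zero => exact hmmono (Nat.le_zero.mp hk).ge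
          | succ k ih =>
            rcases Nat.lt_or_ge J (k+1) with h' | h'
            · have hk' : J ≤ k := Nat.lt_succ_iff.mp h'
              exact le_trans (hcon k hk') (ih hk')
            · exact hmmono h'
        have hbound : ∀ k, m k ≤ m J := by
          intro k
          rcases le_or_gt k J with h' | h'
          · exact hmmono h'
          · exact hconst k h'.le
        obtain ⟨k, hk⟩ := (hB (m J)).imp (fun k hk => hk)
        exact absurd (hbound k) (not_le.2 hk)
      obtain ⟨k, hkJ, hk⟩ := hrec
      refine ⟨k+1, le_trans hkJ (Nat.le_succ k), ?_⟩
      have hm_eq : m (k+1) = h (k+1) := by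
        rw [hmsucc] at hk ⊢
        rcases max_cases (m k) (h (k+1)) with ⟨h1, _⟩ | ⟨h1, _⟩
        · rw [h1] at hk; exact absurd hk (lt_irrefl _)
        · exact h1
      have hratio : h (k+1) / m (k+1) = 1 := by
        rw [hm_eq]
        exact div_self (ne_of_gt (hm_eq ▸ hmpos (k+1)))
      calc (1:ℝ) ≤ (2:ℝ)^(k+1) := one_le_pow₀ (by norm_num)
        _ = (2:ℝ)^(k+1) * (h (k+1) / m (k+1)) := by rw [hratio, mul_one]
        _ ≤ ∑ n ∈ Finset.Ico (N (k+1)) (N (k+2)), ℓ n := hGp (k+1)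
    rw [Filter.eventually_atTop] at hev
    obtain ⟨J, hJ⟩ := hev
    obtain ⟨k, hkJ, hk⟩ := hfreq J
    exact absurd (hJ k hkJ) (not_lt.2 hk)
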